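/- If additionally X and Y are independent, then L_g(s) = L_Y(s)·(1 - L_X(s))/(s·E[X]) for all s > 0. -/

import Mathlib

open MeasureTheory Set ProbabilityTheory

lemma exp_Ioo_integral (s a b : ℝ) (hs : 0 < s) (hab : a ≤ b) :
    ∫ t in Ioo a b, Real.exp (-s * t) =
      (Real.exp (-s * a) - Real.exp (-s * b)) / s := by
  rw [← integral_Ioc_eq_integral_Ioo, ← intervalIntegral.integral_of_le hab]
  have hderiv : ∀ t ∈ Set.uIcc a b,
      HasDerivAt (fun u => -Real.exp (-s * u) / s) (Real.exp (-s * t)) t := by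
    intro t _
    have h1 : HasDerivAt (fun u : ℝ => -s * u) (-s) t := by
      simpa using (hasDerivAt_id t).const_mul (-s)
    have h2 := (Real.hasDerivAt_exp (-s * t)).comp t h1
    have h3 := h2.neg.div_const s
    convert h3 using 1
    · rfl
    · rfl
    · rfl
    · field_simp
  rw [intervalIntegral.integral_eq_sub_of_hasDerivAt hderiv]
  · ring
  · exact (Real.continuous_exp.comp (continuous_const.mul continuous_id)).intervalIntegrable a b

lemma exp_Ioo_lintegral (s a b : ℝ) (hs : 0 < s) (hab : a ≤ b) :
    ∫⁻ t in Ioo a b, ENNReal.ofReal (Real.exp (-s * t)) =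
      ENNReal.ofReal ((Real.exp (-s * a) - Real.exp (-s * b)) / s) := by
  rw [← exp_Ioo_integral s a b hs hab, ← ofReal_integral_eq_lintegral_ofReal]
  · exact ((Real.continuous_exp.comp (continuous_const.mul continuous_id)).integrableOn_Icc).mono_set
      Ioo_subset_Icc_self
  · filter_upwards with t using (Real.exp_pos _).le

theorem generation_time_laplace_indep
    {Ω : Type*} [MeasurableSpace Ω] (μ : Measure Ω) [IsProbabilityMeasure μ]
    (X Y : Ω → ℝ) (hX : Measurable X) (hY : Measurable Y)
    (hXpos : ∀ ω, 0 ≤ X ω) (hYpos : ∀ ω, 0 ≤ Y ω)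
    (hindep : IndepFun X Y μ)
    (hXint : Integrable X μ) (hEX : 0 < ∫ ω, X ω ∂μ)
    (g : ℝ → ℝ)
    (hg : ∀ t, g t = (μ {ω | Y ω < t ∧ t < X ω + Y ω}).toReal / ∫ ω, X ω ∂μ) :
    ∀ s : ℝ, 0 < s →
      ∫ t in Ioi (0:ℝ), Real.exp (-s * t) * g t =
        (∫ ω, Real.exp (-s * Y ω) ∂μ) * (1 - ∫ ω, Real.exp (-s * X ω) ∂μ) /
          (s * ∫ ω, X ω ∂μ) := by
  intro s hs
  set EX := ∫ ω, X ω ∂μ with hEXdef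
  -- auxiliary measurability
  set S : Set (ℝ × Ω) := {p | Y p.2 < p.1 ∧ p.1 < X p.2 + Y p.2} with hSdef
  have hS : MeasurableSet S :=
    (measurableSet_lt (hY.comp measurable_snd) measurable_fst).inter
      (measurableSet_lt measurable_fst ((hX.comp measurable_snd).add (hY.comp measurable_snd)))
  have hA : ∀ t : ℝ, {ω | Y ω < t ∧ t < X ω + Y ω} = Prod.mk t ⁻¹' S := by
    intro t; rfl
  have hmeasA : Measurable fun t : ℝ => μ (Prod.mk t ⁻¹' S) :=
    measurable_measure_prodMk_left hS
  -- the target function h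
  set h : Ω → ℝ := fun ω => Real.exp (-s * Y ω) * (1 - Real.exp (-s * X ω)) / s with hhdef
  have hhnn : ∀ ω, 0 ≤ h ω := by
    intro ω
    apply div_nonneg _ hs.le
    apply mul_nonneg (Real.exp_pos _).le
    have : Real.exp (-s * X ω) ≤ 1 := by
      rw [Real.exp_le_one_iff]
      have := hXpos ω
      nlinarith
    linarith
  -- integrabilities
  have hmexpY : Measurable fun ω => Real.exp (-s * Y ω) :=
    Real.measurable_exp.comp (measurable_const.mul hY)
  have hmexpX : Measurable fun ω => Real.exp (-s * X ω) :=
    Real.measurable_exp.comp (measurable_const.mul hX)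
  have hexp_le_one : ∀ (f : Ω → ℝ), (∀ ω, 0 ≤ f ω) → ∀ ω, Real.exp (-s * f ω) ≤ 1 := by
    intro f hf ω
    rw [Real.exp_le_one_iff]
    have := hf ω
    nlinarith
  have hintY : Integrable (fun ω => Real.exp (-s * Y ω)) μ := by
    apply Integrable.mono (integrable_const (1:ℝ)) hmexpY.aestronglyMeasurable
    filter_upwards with ω
    simp only [Real.norm_eq_abs, norm_one, abs_of_nonneg (Real.exp_pos _).le]
    exact hexp_le_one Y hYpos ω
  have hintX' : Integrable (fun ω => Real.exp (-s * X ω)) μ := by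
    apply Integrable.mono (integrable_const (1:ℝ)) hmexpX.aestronglyMeasurable
    filter_upwards with ω
    simp only [Real.norm_eq_abs, norm_one, abs_of_nonneg (Real.exp_pos _).le]
    exact hexp_le_one X hXpos ω
  have hint2 : Integrable (fun ω => 1 - Real.exp (-s * X ω)) μ :=
    (integrable_const (1:ℝ)).sub hintX'
  have hinth : Integrable h μ := by
    apply Integrable.div_const
    apply Integrable.bdd_mul (c := 1) hint2 hmexpY.aestronglyMeasurable
    refine Filter.Eventually.of_forall (fun ω => ?_)
    simp only [Real.norm_eq_abs, abs_of_nonneg (Real.exp_pos _).le]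
    exact hexp_le_one Y hYpos ω
  -- independence of transformed variables
  have hindep' : IndepFun (fun ω => Real.exp (-s * Y ω)) (fun ω => 1 - Real.exp (-s * X ω)) μ :=
    hindep.symm.comp (Real.measurable_exp.comp (measurable_const.mul measurable_id))
      (measurable_const.sub (Real.measurable_exp.comp (measurable_const.mul measurable_id)))
  -- key identity
  have key : ∫ t in Ioi (0:ℝ), Real.exp (-s * t) * (μ (Prod.mk t ⁻¹' S)).toReal
      = ∫ ω, h ω ∂μ := by
    rw [MeasureTheory.integral_eq_lintegral_of_nonneg_ae]
    · have step1 : ∀ t : ℝ, ENNReal.ofReal (Real.exp (-s * t) * (μ (Prod.mk t ⁻¹' S)).toReal)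
          = ENNReal.ofReal (Real.exp (-s * t)) * μ (Prod.mk t ⁻¹' S) := by
        intro t
        rw [ENNReal.ofReal_mul (Real.exp_pos _).le, ENNReal.ofReal_toReal (measure_ne_top μ _)]
      simp_rw [step1]
      have step2 : ∫⁻ t in Ioi (0:ℝ), ENNReal.ofReal (Real.exp (-s * t)) * μ (Prod.mk t ⁻¹' S)
          = ∫⁻ ω, ENNReal.ofReal (h ω) ∂μ := by
        have e1 : ∀ t : ℝ, ENNReal.ofReal (Real.exp (-s * t)) * μ (Prod.mk t ⁻¹' S)
            = ∫⁻ ω, ENNReal.ofReal (Real.exp (-s * t)) * S.indicator 1 (t, ω) ∂μ := by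
          intro t
          rw [lintegral_const_mul]
          · congr 1
            rw [← lintegral_indicator_one (measurable_prodMk_left hS)]
            rfl
          · exact (measurable_const.indicator hS).comp measurable_prodMk_left
        simp_rw [e1]
        rw [lintegral_lintegral_swap]
        · congr 1
          ext ω
          have e2 : ∀ t : ℝ, ENNReal.ofReal (Real.exp (-s * t)) * S.indicator 1 (t, ω)
              = (Ioo (Y ω) (X ω + Y ω)).indicator
                  (fun t => ENNReal.ofReal (Real.exp (-s * t))) t := by
            intro t
            by_cases ht : t ∈ Ioo (Y ω) (X ω + Y ω)
            · rw [Set.indicator_of_mem ht]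
              have hmem : (t, ω) ∈ S := ⟨ht.1, ht.2⟩
              rw [Set.indicator_of_mem hmem]
              simp
            · rw [Set.indicator_of_notMem ht]
              have hmem : (t, ω) ∉ S := fun hc => ht ⟨hc.1, hc.2⟩
              rw [Set.indicator_of_notMem hmem, mul_zero]
          simp_rw [e2]
          rw [lintegral_indicator (measurableSet_Ioo), Measure.restrict_restrict measurableSet_Ioo]
          have hsub : Ioo (Y ω) (X ω + Y ω) ∩ Ioi 0 = Ioo (Y ω) (X ω + Y ω) := by
            apply inter_eq_left.mpr
            intro t ht
            exact lt_of_le_of_lt (hYpos ω) ht.1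
          rw [hsub]
          have hab : Y ω ≤ X ω + Y ω := by have := hXpos ω; linarith
          rw [exp_Ioo_lintegral s _ _ hs hab]
          congr 1
          rw [hhdef]
          have : -s * (X ω + Y ω) = -s * X ω + -s * Y ω := by ring
          rw [this, Real.exp_add]
          ring
        · apply Measurable.aemeasurable
          apply Measurable.mul
          · exact (ENNReal.measurable_ofReal.comp
              (Real.measurable_exp.comp (measurable_const.mul measurable_fst)))
          · exact measurable_const.indicator hS
      rw [step2, ← ofReal_integral_eq_lintegral_ofReal hinth]
      · rw [ENNReal.toReal_ofReal (integral_nonneg hhnn)]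
      · filter_upwards with ω using hhnn ω
    · filter_upwards with t
      exact mul_nonneg (Real.exp_pos _).le ENNReal.toReal_nonneg
    · exact ((Real.measurable_exp.comp (measurable_const.mul measurable_id)).mul
        (hmeasA.ennreal_toReal)).aestronglyMeasurable
  -- final assembly
  have hLint : ∫ ω, h ω ∂μ =
      (∫ ω, Real.exp (-s * Y ω) ∂μ) * (1 - ∫ ω, Real.exp (-s * X ω) ∂μ) / s := by
    rw [hhdef]
    simp_rw [div_eq_mul_inv]
    rw [integral_mul_const]
    have hmul := hindep'.integral_mul_eq_mul_integral hintY.aestronglyMeasurable hint2.aestronglyMeasurable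
    rw [Pi.mul_def] at hmul
    rw [hmul]
    rw [integral_sub (integrable_const 1) hintX', integral_const]
    simp
  calc ∫ t in Ioi (0:ℝ), Real.exp (-s * t) * g t
      = ∫ t in Ioi (0:ℝ), Real.exp (-s * t) * (μ (Prod.mk t ⁻¹' S)).toReal / EX := by
        congr 1; ext t; rw [hg t, hA t]; ring
    _ = (∫ t in Ioi (0:ℝ), Real.exp (-s * t) * (μ (Prod.mk t ⁻¹' S)).toReal) / EX :=
        integral_div EX _
    _ = (∫ ω, h ω ∂μ) / EX := by rw [key]
    _ = (∫ ω, Real.exp (-s * Y ω) ∂μ) * (1 - ∫ ω, Real.exp (-s * X ω) ∂μ) / (s * EX) := by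
        rw [hLint, div_div]
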